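/- Let ρ > 0, let f : [0,ρ] → ℝ be continuous, and for z in the open ball B_ρ(0) ⊂ ℝⁿ set v(z) := f(ρ − |z|). Fix z₀ ∈ B_ρ(0) with z₀ ≠ 0, and let ψ be a C¹ function that touches v from above at z₀ (i.e., ψ(z₀) = v(z₀) and ψ ≥ v in a neighborhood of z₀). Then the superdifferential D⁺f(ρ − |z₀|) is nonempty and ∇ψ(z₀) = α·z₀/|z₀| for some α with −α ∈ D⁺f(ρ − |z₀|). -/

import Mathlib

open scoped InnerProductSpace
open Metric Set Filter

noncomputable section

abbrev En (n : ℕ) := EuclideanSpace ℝ (Fin n)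

variable {n : ℕ}

/-- Distance from the boundary of `Ω`. -/
noncomputable def dBd (Ω : Set (En n)) (x : En n) : ℝ := Metric.infDist x (frontier Ω)

/-- The inradius `ρ_Ω := max_{closure Ω} d_∂Ω`. -/
noncomputable def rhoΩ (Ω : Set (En n)) : ℝ := sSup (dBd Ω '' closure Ω)

/-- The singular set `Σ(Ω)`: points of `Ω` where `d_∂Ω` is not differentiable. -/
def SingSet (Ω : Set (En n)) : Set (En n) := {x ∈ Ω | ¬ DifferentiableAt ℝ (dBd Ω) x}

/-- The cut locus: the closure of the singular set. -/
def cutLocus (Ω : Set (En n)) : Set (En n) := closure (SingSet Ω)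

/-- The high ridge: points of `closure Ω` where `d_∂Ω` attains its maximum `ρ_Ω`. -/
def highRidge (Ω : Set (En n)) : Set (En n) := {x ∈ closure Ω | dBd Ω x = rhoΩ Ω}

noncomputable def c₀ : ℝ := 3 ^ ((4 : ℝ) / 3) / 4

/-- The candidate web solution `φ_Ω`. -/
noncomputable def phiΩ (Ω : Set (En n)) (x : En n) : ℝ :=
  c₀ * (rhoΩ Ω ^ ((4 : ℝ) / 3) - (rhoΩ Ω - dBd Ω x) ^ ((4 : ℝ) / 3))

/-- The infinity Laplacian `⟨D²φ(x)∇φ(x), ∇φ(x)⟩` of a smooth function. -/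
noncomputable def infLap (φ : En n → ℝ) (x : En n) : ℝ :=
  ⟪(fderiv ℝ (gradient φ) x) (gradient φ x), gradient φ x⟫_ℝ

/-- Viscosity subsolution of `-Δ_∞ u = 1` on an open set `A`. -/
def IsViscSubsol (A : Set (En n)) (u : En n → ℝ) : Prop :=
  ∀ φ : En n → ℝ, ContDiffOn ℝ 2 φ A → ∀ x₀ ∈ A,
    IsLocalMin (φ - u) x₀ → -infLap φ x₀ ≤ 1

/-- Viscosity supersolution of `-Δ_∞ u = 1` on an open set `A`. -/
def IsViscSupersol (A : Set (En n)) (u : En n → ℝ) : Prop :=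
  ∀ φ : En n → ℝ, ContDiffOn ℝ 2 φ A → ∀ x₀ ∈ A,
    IsLocalMax (φ - u) x₀ → 1 ≤ -infLap φ x₀

/-- Viscosity solution of `-Δ_∞ u = 1` on an open set `A`. -/
def IsViscSol (A : Set (En n)) (u : En n → ℝ) : Prop :=
  ContinuousOn u A ∧ IsViscSubsol A u ∧ IsViscSupersol A u

/-- Viscosity solution of the Dirichlet problem `-Δ_∞ u = 1` in `Ω`, `u = 0` on `∂Ω`. -/
def IsDirichletSol (Ω : Set (En n)) (u : En n → ℝ) : Prop :=
  ContinuousOn u (closure Ω) ∧ (∀ x ∈ frontier Ω, u x = 0) ∧ IsViscSol Ω u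

/-- `u` is a web function on `Ω`: it depends only on the distance from the boundary. -/
def IsWebOn (Ω : Set (En n)) (u : En n → ℝ) : Prop :=
  ∃ f : ℝ → ℝ, ContinuousOn f (Set.Icc 0 (rhoΩ Ω)) ∧ ∀ x ∈ closure Ω, u x = f (dBd Ω x)

/-- Fréchet superdifferential of `u` at `x`. -/
def superDiff (u : En n → ℝ) (x : En n) : Set (En n) :=
  {p | ∀ ε > 0, ∀ᶠ y in nhds x, u y - u x - ⟪p, y - x⟫_ℝ ≤ ε * ‖y - x‖}

/-- Set of reachable gradients `D*u(x)`. -/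
def reachGrad (u : En n → ℝ) (x : En n) : Set (En n) :=
  {p | ∃ xs : ℕ → En n, (∀ h, xs h ≠ x) ∧ (∀ h, DifferentiableAt ℝ u (xs h)) ∧
    Filter.Tendsto xs Filter.atTop (nhds x) ∧
    Filter.Tendsto (fun h => gradient u (xs h)) Filter.atTop (nhds p)}

/-- The set of projections of `x` onto a closed set `S`. -/
def projSet (S : Set (En n)) (x : En n) : Set (En n) :=
  {y ∈ S | dist x y = Metric.infDist x S}

end
/-- Fréchet superdifferential of `f : [0,ρ] → ℝ` at `t`. -/
def superDiff1 (f : ℝ → ℝ) (ρ t : ℝ) : Set ℝ :=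
  {q | ∀ ε > (0 : ℝ), ∀ᶠ s in nhdsWithin t (Set.Icc 0 ρ),
    f s - f t - q * (s - t) ≤ ε * |s - t|}

set_option maxHeartbeats 1600000 in
/-- If a `C¹` function `ψ` touches `v(z) = f(ρ - |z|)` from above at
`z₀ ≠ 0`, then `D⁺f(ρ - |z₀|) ≠ ∅` and `∇ψ(z₀) = α z₀/|z₀|` with `-α ∈ D⁺f(ρ - |z₀|)`. -/
theorem touching_from_above_radial {n : ℕ} (ρ : ℝ) (hρ : 0 < ρ) (f : ℝ → ℝ)
    (hf : ContinuousOn f (Set.Icc 0 ρ)) (z₀ : En n) (hz₀ : z₀ ∈ Metric.ball (0 : En n) ρ)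
    (hz₀0 : z₀ ≠ 0) (ψ : En n → ℝ) (hψ : ContDiff ℝ 1 ψ)
    (htouch₀ : ψ z₀ = f (ρ - ‖z₀‖))
    (htouch : ∀ᶠ z in nhds z₀, f (ρ - ‖z‖) ≤ ψ z) :
    (superDiff1 f ρ (ρ - ‖z₀‖)).Nonempty ∧
      ∃ α : ℝ, -α ∈ superDiff1 f ρ (ρ - ‖z₀‖) ∧
        gradient ψ z₀ = α • (‖z₀‖⁻¹ • z₀) := by
  classical
  have hz₀n : (0:ℝ) < ‖z₀‖ := norm_pos_iff.mpr hz₀0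
  have hzρ : ‖z₀‖ < ρ := by simpa [Metric.mem_ball, dist_zero_right] using hz₀
  set t₀ : ℝ := ρ - ‖z₀‖ with ht₀
  set u : En n := ‖z₀‖⁻¹ • z₀ with hu_def
  have hu : ‖u‖ = 1 := by
    rw [hu_def, norm_smul, norm_inv, norm_norm, inv_mul_cancel₀ hz₀n.ne']
  set g : En n := gradient ψ z₀ with hg_def
  set α : ℝ := ⟪g, u⟫_ℝ with hα_def
  set w : En n := g - α • u with hw_def
  have hdiff : DifferentiableAt ℝ ψ z₀ := (hψ.differentiable one_ne_zero) z₀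
  have hgrad : HasGradientAt ψ g z₀ := hdiff.hasGradientAt
  have hψfd : HasFDerivAt ψ (InnerProductSpace.toDual ℝ (En n) g) z₀ :=
    hasGradientAt_iff_hasFDerivAt.mp hgrad
  have hfd_apply : ∀ y : En n, (InnerProductSpace.toDual ℝ (En n) g) y = ⟪g, y⟫_ℝ := by
    intro y; simp [InnerProductSpace.toDual_apply_apply]
  have huw : ⟪u, w⟫_ℝ = 0 := by
    have hug : ⟪u, g⟫_ℝ = α := by rw [hα_def, real_inner_comm]
    rw [hw_def, inner_sub_right, real_inner_smul_right, real_inner_self_eq_norm_sq, hu, hug]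
    ring
  have hgw : ⟪g, w⟫_ℝ = ‖w‖^2 := by
    have hg' : g = α • u + w := by rw [hw_def]; abel
    rw [hg', inner_add_left, real_inner_smul_left, huw, real_inner_self_eq_norm_sq]
    ring
  have hzw : ⟪z₀, w⟫_ℝ = 0 := by
    have hz' : z₀ = ‖z₀‖ • u := by
      rw [hu_def, smul_smul, mul_inv_cancel₀ hz₀n.ne', one_smul]
    rw [hz', real_inner_smul_left, huw, mul_zero]
  have hnorm : ∀ h : ℝ, ‖z₀ + h • w‖^2 = ‖z₀‖^2 + h^2 * ‖w‖^2 := by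
    intro h
    rw [norm_add_sq_real, real_inner_smul_right, hzw, norm_smul, Real.norm_eq_abs, mul_pow,
      sq_abs]
    ring
  set N : ℝ → ℝ := fun h => ‖z₀‖^2 + h^2 * ‖w‖^2 with hN_def
  have hNpos : ∀ h : ℝ, 0 < N h := fun h =>
    lt_of_lt_of_le (by positivity) (le_add_of_nonneg_right (by positivity))
  have hsqrtN : ∀ h : ℝ, Real.sqrt (N h) = ‖z₀ + h • w‖ := by
    intro h
    simp only [hN_def]
    rw [← hnorm h, Real.sqrt_sq (norm_nonneg _)]
  have hsqrt0 : Real.sqrt (N 0) = ‖z₀‖ := by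
    rw [hsqrtN]; simp
  set c : ℝ → En n := fun h => (‖z₀‖ / Real.sqrt (N h)) • (z₀ + h • w) with hc_def
  have hc0 : c 0 = z₀ := by
    rw [hc_def]; simp [hsqrt0, div_self hz₀n.ne']
  have hcnorm : ∀ h : ℝ, ‖c h‖ = ‖z₀‖ := by
    intro h
    rw [hc_def]
    simp only [norm_smul, Real.norm_eq_abs]
    rw [← hsqrtN h, abs_of_nonneg (div_nonneg (norm_nonneg _) (Real.sqrt_nonneg _)),
      div_mul_cancel₀]
    exact (Real.sqrt_pos.mpr (hNpos h)).ne'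
  have hNderiv : HasDerivAt N 0 0 := by
    have h1 : HasDerivAt (fun h : ℝ => h^2 * ‖w‖^2) (2 * 0 ^ 1 * ‖w‖^2) 0 :=
      (hasDerivAt_pow 2 (0:ℝ)).mul_const _
    have h2 := h1.const_add (‖z₀‖^2)
    simpa [hN_def] using h2
  have hsderiv : HasDerivAt (fun h => ‖z₀‖ / Real.sqrt (N h)) 0 0 := by
    have hs : HasDerivAt (fun h => Real.sqrt (N h)) (0 / (2 * Real.sqrt (N 0))) 0 :=
      hNderiv.sqrt (hNpos 0).ne'
    have h2 : HasDerivAt (fun h => Real.sqrt (N h)) 0 0 := by simpa using hs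
    have h3 := h2.inv (by rw [hsqrt0]; exact hz₀n.ne')
    have h4 := h3.const_mul (‖z₀‖)
    simpa [div_eq_mul_inv] using h4
  have hvderiv : HasDerivAt (fun h : ℝ => z₀ + h • w) w 0 := by
    have h1 : HasDerivAt (fun h : ℝ => h • w) w 0 := by
      simpa using (hasDerivAt_id (0:ℝ)).smul_const w
    simpa using h1.const_add z₀
  have hcderiv : HasDerivAt c w 0 := by
    have h5 := hsderiv.smul hvderiv
    rw [hc_def]
    refine h5.congr_deriv ?_
    rw [hsqrt0, div_self hz₀n.ne']
    simp
  have hcont : ContinuousAt c 0 := hcderiv.continuousAt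
  have hmem : ∀ᶠ h : ℝ in nhds 0, c h ∈ {z | f (ρ - ‖z‖) ≤ ψ z} := by
    have h6 := hcont.tendsto
    rw [hc0] at h6
    exact h6.eventually htouch
  have hlocmin : IsLocalMin (ψ ∘ c) 0 := by
    filter_upwards [hmem] with h hh
    have h7 : f (ρ - ‖c h‖) ≤ ψ (c h) := hh
    rw [hcnorm h] at h7
    simpa [Function.comp, hc0, htouch₀] using h7
  have hcomp : HasDerivAt (ψ ∘ c) (⟪g, w⟫_ℝ) 0 := by
    have hψfd' : HasFDerivAt ψ (InnerProductSpace.toDual ℝ (En n) g) (c 0) := by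
      rw [hc0]; exact hψfd
    have h8 := hψfd'.comp_hasDerivAt 0 hcderiv
    rw [hfd_apply] at h8
    exact h8
  have hw0 : w = 0 := by
    have h9 := hlocmin.hasDerivAt_eq_zero hcomp
    rw [hgw] at h9
    have h10 : ‖w‖ = 0 := by nlinarith [norm_nonneg w]
    exact norm_eq_zero.mp h10
  have hg_rad : g = α • u := by
    have h11 := hw_def
    rw [hw0] at h11
    have := sub_eq_zero.mp h11.symm
    exact this
  -- Part B: the radial curve
  set γ : ℝ → En n := fun s => (ρ - s) • u with hγ_def
  have hγt₀ : γ t₀ = z₀ := by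
    rw [hγ_def]
    simp only [ht₀, sub_sub_cancel, hu_def, smul_smul, mul_inv_cancel₀ hz₀n.ne', one_smul]
  have hγd : HasDerivAt γ (-u) t₀ := by
    have h1 : HasDerivAt (fun s : ℝ => ρ - s) (-1) t₀ := (hasDerivAt_id t₀).const_sub ρ
    have h2 := h1.smul_const u
    simpa using h2
  have hcompγ : HasDerivAt (ψ ∘ γ) (-α) t₀ := by
    have hψfd' : HasFDerivAt ψ (InnerProductSpace.toDual ℝ (En n) g) (γ t₀) := by
      rw [hγt₀]; exact hψfd
    have h3 := hψfd'.comp_hasDerivAt t₀ hγd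
    rw [hfd_apply, inner_neg_right, ← hα_def] at h3
    exact h3
  have hlo := hasDerivAt_iff_isLittleO.mp hcompγ
  have hqmem : -α ∈ superDiff1 f ρ t₀ := by
    intro ε hε
    have hev1 : ∀ᶠ s in nhds t₀, ‖ψ (γ s) - ψ (γ t₀) - (s - t₀) • (-α)‖ ≤ ε * ‖s - t₀‖ :=
      hlo.def hε
    have hev2 : ∀ᶠ s in nhds t₀, γ s ∈ {z | f (ρ - ‖z‖) ≤ ψ z} := by
      have h6 := hγd.continuousAt.tendsto
      rw [hγt₀] at h6
      exact h6.eventually htouch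
    have h12 := (hev1.and hev2).filter_mono
      (nhdsWithin_le_nhds : nhdsWithin t₀ (Set.Icc 0 ρ) ≤ nhds t₀)
    filter_upwards [h12, self_mem_nhdsWithin] with s hs hsI
    obtain ⟨h1, h2⟩ := hs
    have hsρ : s ≤ ρ := hsI.2
    have hγn : ‖γ s‖ = ρ - s := by
      rw [hγ_def]
      simp only [norm_smul, hu, mul_one, Real.norm_eq_abs]
      exact abs_of_nonneg (by linarith)
    have hfψ : f s ≤ ψ (γ s) := by
      have h13 : f (ρ - ‖γ s‖) ≤ ψ (γ s) := h2
      rwa [hγn, sub_sub_cancel] at h13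
    have hft₀ : ψ (γ t₀) = f t₀ := by rw [hγt₀, htouch₀]
    have h14 : ψ (γ s) - ψ (γ t₀) - (s - t₀) * (-α) ≤ ε * |s - t₀| := by
      calc ψ (γ s) - ψ (γ t₀) - (s - t₀) * (-α)
          ≤ ‖ψ (γ s) - ψ (γ t₀) - (s - t₀) • (-α)‖ := by
            rw [smul_eq_mul, Real.norm_eq_abs]; exact le_abs_self _
        _ ≤ ε * ‖s - t₀‖ := h1
        _ = ε * |s - t₀| := by rw [Real.norm_eq_abs]
    have h15 : f s - f t₀ - (-α) * (s - t₀) ≤ ψ (γ s) - ψ (γ t₀) - (s - t₀) * (-α) := by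
      rw [hft₀]; nlinarith [hfψ]
    linarith
  exact ⟨⟨-α, hqmem⟩, α, hqmem, hg_rad⟩
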